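/- Let ℏ, m, g, E₀, N > 0, set κ = √(2mE₀)/ℏ, and for each n ≥ 0 define ψₙ : (ℝ³)ⁿ → ℂ by ψₙ(y₁,…,yₙ) = N (−gm)ⁿ / ((2πℏ²)ⁿ √(n!)) ∏_{j=1}^n e^{−κ|y_j|}/|y_j| (with ψ₀ = N). Then each ψₙ is square-integrable on (ℝ³)ⁿ and the total Fock-space norm is finite and given explicitly by Σ_{n=0}^∞ ∫_{(ℝ³)ⁿ} |ψₙ(y₁,…,yₙ)|² d^{3n}y = N² · exp( g² m² / (2π ℏ⁴ κ) ). -/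

import Mathlib

open Real Complex MeasureTheory

/-- The sectors of the dressed ground state of the van Hove-type IBC model:
`ψₙ(y₁,…,yₙ) = N (−gm)ⁿ/((2πℏ²)ⁿ √n!) ∏ⱼ e^{−κ|yⱼ|}/|yⱼ|`. -/
noncomputable def dressedState (ℏ m g κ N : ℝ) (n : ℕ)
    (y : Fin n → EuclideanSpace ℝ (Fin 3)) : ℂ :=
  ((N * (-(g * m)) ^ n / ((2 * π * ℏ ^ 2) ^ n * Real.sqrt (Nat.factorial n)) *
      ∏ j, Real.exp (-(κ * ‖y j‖)) / ‖y j‖ : ℝ) : ℂ)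

private lemma integrable_subtype_comap_iff {α : Type*} [MeasurableSpace α] {μ : Measure α}
    {s : Set α} (hs : MeasurableSet s) (f : α → ℝ) :
    Integrable (fun x : s => f x) (μ.comap (↑)) ↔ IntegrableOn f s μ := by
  rw [IntegrableOn, ← map_comap_subtype_coe hs,
    (MeasurableEmbedding.subtype_coe hs).integrable_map_iff]
  exact Iff.rfl

open Set Metric Module in
private lemma integrable_radial3 {f : ℝ → ℝ} (hf : Measurable f)
    (hint : IntegrableOn (fun r => f r * r ^ 2) (Set.Ioi (0:ℝ))) :
    Integrable (fun x : EuclideanSpace ℝ (Fin 3) => f ‖x‖) := by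
  set E := EuclideanSpace ℝ (Fin 3)
  set μ : Measure E := volume with hμ
  have hdim : finrank ℝ E = 3 := finrank_euclideanSpace_fin
  have h2 : Integrable (fun r : Set.Ioi (0:ℝ) => f r.1)
      (Measure.volumeIoiPow (finrank ℝ E - 1)) := by
    rw [hdim, Measure.volumeIoiPow,
      integrable_withDensity_iff (by measurability) (ae_of_all _ fun r => ENNReal.ofReal_lt_top)]
    have heq : (fun (r : Set.Ioi (0:ℝ)) => f r.1 * (ENNReal.ofReal (r.1 ^ (3-1))).toReal)
        = fun (r : Set.Ioi (0:ℝ)) => (fun x => f x * x ^ 2) r.1 := by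
      funext r
      rw [ENNReal.toReal_ofReal (pow_nonneg (le_of_lt r.2) _)]
    rw [heq]
    exact (integrable_subtype_comap_iff measurableSet_Ioi (fun x => f x * x ^ 2)).mpr hint
  have hprod : Integrable (fun p : sphere (0:E) 1 × Set.Ioi (0:ℝ) => f p.2.1)
      (μ.toSphere.prod (Measure.volumeIoiPow (finrank ℝ E - 1))) := by
    have := (integrable_const (1:ℝ) (μ := μ.toSphere)).mul_prod h2
    simpa using this
  have h1 : Integrable (fun x : ({(0:E)}ᶜ : Set E) => f ‖x.1‖) (μ.comap (↑)) := by
    rw [show (fun x : ({(0:E)}ᶜ : Set E) => f ‖x.1‖)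
        = (fun p : sphere (0:E) 1 × Set.Ioi (0:ℝ) => f p.2.1) ∘ (homeomorphUnitSphereProd E)
        from funext fun x => by simp [homeomorphUnitSphereProd_apply_snd_coe],
      (μ.measurePreserving_homeomorphUnitSphereProd).integrable_comp_emb
        (Homeomorph.measurableEmbedding _)]
    exact hprod
  have h3 : IntegrableOn (fun x : E => f ‖x‖) ({(0:E)}ᶜ) μ := by
    rw [← integrable_subtype_comap_iff (measurableSet_singleton (0:E)).compl]
    exact h1
  rwa [IntegrableOn, MeasureTheory.restrict_compl_singleton] at h3

open Set Metric Module in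
private lemma integral_radial3 (f : ℝ → ℝ) :
    ∫ x : EuclideanSpace ℝ (Fin 3), f ‖x‖
      = (4 * π) * ∫ r in Set.Ioi (0:ℝ), r ^ 2 * f r := by
  rw [integral_fun_norm_addHaar (volume : Measure (EuclideanSpace ℝ (Fin 3))) f]
  have hdim : finrank ℝ (EuclideanSpace ℝ (Fin 3)) = 3 := finrank_euclideanSpace_fin
  rw [hdim]
  have hball : (volume (ball (0 : EuclideanSpace ℝ (Fin 3)) 1)).toReal = 4 * π / 3 := by
    rw [EuclideanSpace.volume_ball (Fin 3) 0 1]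
    have hcard : (Fintype.card (Fin 3) : ℝ) = 3 := by simp
    have h32 : ((Fintype.card (Fin 3) : ℝ) / 2 + 1) = (1/2 + 1) + 1 := by
      rw [hcard]; norm_num
    have hΓ : Real.Gamma ((Fintype.card (Fin 3) : ℝ) / 2 + 1) = 3 / 4 * Real.sqrt π := by
      rw [h32, Real.Gamma_add_one (by norm_num), Real.Gamma_add_one (by norm_num),
        Real.Gamma_one_half_eq]
      ring
    have hsqrtπ : Real.sqrt π ≠ 0 := by positivity
    have hval : Real.sqrt π ^ Fintype.card (Fin 3)
        / Real.Gamma ((Fintype.card (Fin 3) : ℝ) / 2 + 1) = 4 * π / 3 := by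
      rw [hΓ]
      have hcube : Real.sqrt π ^ Fintype.card (Fin 3) = π * Real.sqrt π := by
        rw [show Fintype.card (Fin 3) = 3 from rfl, pow_succ, sq_sqrt Real.pi_pos.le]
      rw [hcube]
      field_simp
    rw [hval, ENNReal.ofReal_one, one_pow, one_mul, ENNReal.toReal_ofReal (by positivity)]
  rw [measureReal_def, hball, show (3:ℕ) - 1 = 2 from rfl]
  simp only [smul_eq_mul, nsmul_eq_mul, Nat.cast_ofNat]
  ring

theorem dressedState_fock_norm
    (ℏ m g E₀ N : ℝ) (hℏ : 0 < ℏ) (hm : 0 < m) (hg : 0 < g) (hE₀ : 0 < E₀) (hN : 0 < N)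
    (κ : ℝ) (hκdef : κ = Real.sqrt (2 * m * E₀) / ℏ) :
    (∀ n : ℕ, MemLp (dressedState ℏ m g κ N n) 2
        (volume : Measure (Fin n → EuclideanSpace ℝ (Fin 3)))) ∧
    ∑' n : ℕ, ∫ y : Fin n → EuclideanSpace ℝ (Fin 3), ‖dressedState ℏ m g κ N n y‖ ^ 2
      = N ^ 2 * Real.exp (g ^ 2 * m ^ 2 / (2 * π * ℏ ^ 4 * κ)) := by
  have hκ : 0 < κ := by
    rw [hκdef]
    exact div_pos (Real.sqrt_pos.2 (by positivity)) hℏ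
  have hπ : (0:ℝ) < π := Real.pi_pos
  set f : ℝ → ℝ := fun r => (Real.exp (-(κ * r)) / r) ^ 2 with hf_def
  have hf_meas : Measurable f := by
    apply Measurable.pow_const
    exact (Real.measurable_exp.comp (measurable_const.mul measurable_id).neg).div measurable_id
  have hcongr : ∀ r ∈ Set.Ioi (0:ℝ), f r * r ^ 2 = Real.exp (-(2*κ*r)) := by
    intro r hr
    have hr2 : (r:ℝ) ^ 2 ≠ 0 := pow_ne_zero _ (ne_of_gt hr)
    rw [hf_def]
    simp only
    rw [div_pow, div_mul_cancel₀ _ hr2, sq, ← Real.exp_add]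
    congr 1
    ring
  have hint1 : IntegrableOn (fun r => f r * r ^ 2) (Set.Ioi (0:ℝ)) :=
    (exp_neg_integrableOn_Ioi 0 (by positivity : (0:ℝ) < 2*κ)).congr_fun
      (fun r hr => by show Real.exp (-(2*κ) * r) = f r * r ^ 2; rw [neg_mul]; exact (hcongr r hr).symm)
      measurableSet_Ioi
  have hInt : Integrable (fun x : EuclideanSpace ℝ (Fin 3) => f ‖x‖) :=
    integrable_radial3 hf_meas hint1
  have hI : ∫ x : EuclideanSpace ℝ (Fin 3), f ‖x‖ = 2 * π / κ := by
    rw [integral_radial3 f]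
    have hJ : ∫ r in Set.Ioi (0:ℝ), r ^ 2 * f r = (2*κ)⁻¹ := by
      have h1 : ∫ r in Set.Ioi (0:ℝ), r ^ 2 * f r
          = ∫ r in Set.Ioi (0:ℝ), Real.exp (-(2*κ*r)) :=
        setIntegral_congr_fun measurableSet_Ioi
          (fun r hr => by rw [mul_comm]; exact hcongr r hr)
      have key := integral_comp_mul_left_Ioi (fun x => Real.exp (-x)) 0
        (by positivity : (0:ℝ) < 2*κ)
      simp only [mul_zero, smul_eq_mul] at key
      rw [h1, key, integral_exp_neg_Ioi 0]
      simp
    rw [hJ]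
    field_simp
    ring
  -- norm-squared of each sector
  have hnorm : ∀ (n : ℕ) (y : Fin n → EuclideanSpace ℝ (Fin 3)),
      ‖dressedState ℏ m g κ N n y‖ ^ 2
        = (N ^ 2 * ((g*m)^2 / (2*π*ℏ^2)^2) ^ n / (Nat.factorial n)) * ∏ j, f ‖y j‖ := by
    intro n y
    rw [dressedState, Complex.norm_real, Real.norm_eq_abs, _root_.sq_abs]
    rw [mul_pow, div_pow, mul_pow, pow_right_comm, neg_sq,
      mul_pow ((2 * π * ℏ ^ 2) ^ n) (Real.sqrt (Nat.factorial n)) 2,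
      Real.sq_sqrt (Nat.cast_nonneg _), pow_right_comm ((2:ℝ)*π*ℏ^2) n 2,
      ← Finset.prod_pow]
    have hfj : ∀ j, (Real.exp (-(κ * ‖y j‖)) / ‖y j‖) ^ 2 = f ‖y j‖ := fun _ => rfl
    simp only [hfj]
    rw [div_pow]
    ring
  -- value of each sector integral
  set a : ℝ := g ^ 2 * m ^ 2 / (2 * π * ℏ ^ 4 * κ) with ha_def
  have hterm : ∀ n : ℕ,
      ∫ y : Fin n → EuclideanSpace ℝ (Fin 3), ‖dressedState ℏ m g κ N n y‖ ^ 2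
        = N ^ 2 * (a ^ n / Nat.factorial n) := by
    intro n
    have hprodint := MeasureTheory.integral_fintype_prod_eq_pow (𝕜 := ℝ) (ι := Fin n)
      (fun x : EuclideanSpace ℝ (Fin 3) => f ‖x‖) (μ := volume)
    rw [← MeasureTheory.volume_pi] at hprodint
    simp only [hnorm n]
    rw [integral_const_mul, hprodint, hI, Fintype.card_fin]
    have hab : ((g*m)^2 / (2*π*ℏ^2)^2) * (2 * π / κ) = a := by
      rw [ha_def]
      field_simp
    rw [div_mul_eq_mul_div, mul_assoc, ← mul_pow, hab, mul_div_assoc]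
  -- square-integrability of each sector
  have hmem : ∀ n : ℕ, MemLp (dressedState ℏ m g κ N n) 2
      (volume : Measure (Fin n → EuclideanSpace ℝ (Fin 3))) := by
    intro n
    have hsm : AEStronglyMeasurable (dressedState ℏ m g κ N n)
        (volume : Measure (Fin n → EuclideanSpace ℝ (Fin 3))) := by
      apply Measurable.aestronglyMeasurable
      apply Complex.measurable_ofReal.comp
      apply Measurable.mul measurable_const
      exact Finset.measurable_prod _ fun j _ =>
        (Real.measurable_exp.comp
          ((measurable_const.mul (measurable_pi_apply j).norm).neg)).div
          (measurable_pi_apply j).norm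
    rw [memLp_two_iff_integrable_sq_norm hsm]
    have heq : (fun y : Fin n → EuclideanSpace ℝ (Fin 3) => ‖dressedState ℏ m g κ N n y‖ ^ 2)
        = fun y => (N ^ 2 * ((g*m)^2 / (2*π*ℏ^2)^2) ^ n / (Nat.factorial n)) *
            ∏ j, f ‖y j‖ := funext (hnorm n)
    rw [heq]
    exact (MeasureTheory.Integrable.fintype_prod (𝕜 := ℝ)
      (f := fun _ : Fin n => fun x : EuclideanSpace ℝ (Fin 3) => f ‖x‖)
      (fun _ => hInt)).const_mul _
  refine ⟨hmem, ?_⟩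
  rw [tsum_congr hterm, tsum_mul_left]
  congr 1
  rw [Real.exp_eq_exp_ℝ, NormedSpace.exp_eq_tsum_div]
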